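/- Minkowski's first theorem for the shortest lattice vector: for every positive integer n and every invertible matrix B ∈ ℝ^{n×n}, the lattice Λ = {B x : x ∈ ℤ^n} contains a nonzero vector v with ‖v‖² ≤ n · |det B|^{2/n}, where ‖·‖ is the Euclidean norm on ℝ^n. -/

import Mathlib

open MeasureTheory Submodule Set

/-- Minkowski's first theorem for the shortest lattice vector: for every positive
integer `n` and every invertible `B : Matrix (Fin n) (Fin n) ℝ`, the lattice
`{B x : x ∈ ℤ^n}` contains a nonzero vector `v` with `‖v‖² ≤ n · |det B|^(2/n)`. -/
theorem minkowski_first_theorem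
    (n : ℕ) (hn : 0 < n) (B : Matrix (Fin n) (Fin n) ℝ) (hB : IsUnit B.det) :
    ∃ v : Fin n → ℝ, v ≠ 0 ∧
      (∃ x : Fin n → ℤ, v = B.mulVec fun i => (x i : ℝ)) ∧
      ∑ i, v i ^ 2 ≤ (n : ℝ) * |B.det| ^ ((2 : ℝ) / n) := by
  classical
  haveI : NeZero n := ⟨hn.ne'⟩
  set d : ℝ := |B.det| with hd
  have hd0 : 0 < d := abs_pos.mpr hB.ne_zero
  set c : ℝ := d ^ ((1 : ℝ) / n) with hc
  have hc0 : 0 < c := Real.rpow_pos_of_pos hd0 _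
  have hcn : c ^ n = d := by
    rw [hc, ← Real.rpow_natCast (d ^ ((1:ℝ)/n)) n, ← Real.rpow_mul hd0.le,
      one_div, inv_mul_cancel₀ (by exact_mod_cast hn.ne' : (n : ℝ) ≠ 0), Real.rpow_one]
  have hc2 : c ^ 2 = d ^ ((2 : ℝ) / n) := by
    rw [hc, ← Real.rpow_natCast (d ^ ((1:ℝ)/n)) 2, ← Real.rpow_mul hd0.le]
    norm_num
    congr 1
    ring
  -- the basis given by the columns of B
  haveI : Invertible B := B.invertibleOfIsUnitDet hB
  let e : (Fin n → ℝ) ≃ₗ[ℝ] (Fin n → ℝ) := B.toLinearEquiv' ‹_›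
  let b : Module.Basis (Fin n) ℝ (Fin n → ℝ) := (Pi.basisFun ℝ (Fin n)).map e
  have hb : ∀ i j, b i j = B j i := by
    intro i j
    have h1 : (B.toLinearEquiv' ‹Invertible B›) (Pi.single i 1) = Matrix.toLin' B (Pi.single i 1) := rfl
    simp [b, e, h1, Matrix.toLin'_apply, Matrix.mulVec_single]
  -- the convex body
  set r : ℝ := Real.sqrt ((n : ℝ) * d ^ ((2 : ℝ) / n)) with hr
  let f : (Fin n → ℝ) ≃L[ℝ] EuclideanSpace ℝ (Fin n) := (EuclideanSpace.equiv (Fin n) ℝ).symm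
  set s : Set (Fin n → ℝ) := {x | ∑ i, x i ^ 2 ≤ (n : ℝ) * d ^ ((2 : ℝ) / n)} with hs
  have hmem : ∀ x : Fin n → ℝ, x ∈ s ↔ ‖f x‖ ≤ r := by
    intro x
    rw [EuclideanSpace.norm_eq, hr,
      Real.sqrt_le_sqrt_iff (by positivity)]
    simp only [hs, Set.mem_setOf_eq]
    constructor
    · intro hx; simpa [sq_abs, Real.norm_eq_abs, show ∀ i, (f x).ofLp i = x i from fun i => rfl] using hx
    · intro hx; simpa [sq_abs, Real.norm_eq_abs, show ∀ i, (f x).ofLp i = x i from fun i => rfl] using hx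
  have hseq : s = f ⁻¹' (Metric.closedBall 0 r) := by
    ext x
    rw [Set.mem_preimage, Metric.mem_closedBall, dist_zero_right]; exact hmem x
  have h_symm : ∀ x ∈ s, -x ∈ s := by
    intro x hx
    simpa [hs, neg_pow] using hx
  have h_conv : Convex ℝ s := by
    rw [hseq]
    exact (convex_closedBall (0 : EuclideanSpace ℝ (Fin n)) r).linear_preimage
      (f.toLinearEquiv.toLinearMap)
  have h_cpt : IsCompact s := by
    have himg : s = ⇑f.symm '' (Metric.closedBall 0 r) := by
      rw [hseq]
      ext x
      constructor
      · intro h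
        exact ⟨f x, h, f.symm_apply_apply x⟩
      · rintro ⟨y, hy, rfl⟩
        simpa using hy
    rw [himg]
    exact (isCompact_closedBall _ _).image f.symm.continuous
  -- the cube `[-c, c]^n` is contained in `s`
  set Q : Set (Fin n → ℝ) := Set.pi Set.univ (fun _ : Fin n => Set.Icc (-c) c) with hQ
  have hQs : Q ⊆ s := by
    intro x hx
    simp only [hQ, Set.mem_pi, Set.mem_univ, forall_true_left, Set.mem_Icc] at hx
    have : ∀ i, x i ^ 2 ≤ c ^ 2 := fun i => sq_le_sq' (hx i).1 (hx i).2
    calc ∑ i, x i ^ 2 ≤ ∑ _i : Fin n, c ^ 2 := Finset.sum_le_sum fun i _ => this i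
      _ = (n : ℝ) * c ^ 2 := by simp [mul_comm]
      _ = (n : ℝ) * d ^ ((2 : ℝ) / n) := by rw [hc2]
  -- volume computations
  have hQvol : volume Q = ENNReal.ofReal d * 2 ^ n := by
    rw [hQ, volume_pi, Measure.pi_pi]
    simp only [Real.volume_Icc]
    rw [Finset.prod_const, Finset.card_univ, Fintype.card_fin]
    have : c - -c = 2 * c := by ring
    rw [this, ENNReal.ofReal_mul (by norm_num), mul_pow, ← ENNReal.ofReal_pow hc0.le, hcn,
      ENNReal.ofReal_ofNat, mul_comm]
  have hvol : volume (ZSpan.fundamentalDomain b) * 2 ^ Module.finrank ℝ (Fin n → ℝ) ≤ volume s := by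
    rw [ZSpan.volume_fundamentalDomain b, Module.finrank_fintype_fun_eq_card, Fintype.card_fin]
    have hdet : |(Matrix.of ⇑b).det| = d := by
      have : Matrix.of ⇑b = B.transpose := by
        ext i j
        simp [Matrix.transpose_apply, hb]
      rw [this, Matrix.det_transpose]
    rw [hdet, ← hQvol]
    exact measure_mono hQs
  haveI : Nontrivial (Fin n → ℝ) :=
    ⟨0, (fun _ => 1), by
      intro h
      simpa using congrFun h ⟨0, hn⟩⟩
  haveI : IsZLattice ℝ (span ℤ (Set.range ⇑b)) := instIsZLatticeRealSpan b
  haveI : Countable (span ℤ (Set.range ⇑b)).toAddSubgroup :=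
    inferInstanceAs <| Countable (span ℤ (Set.range ⇑b))
  obtain ⟨x, hx0, hxs⟩ := exists_ne_zero_mem_lattice_of_measure_mul_two_pow_le_measure
    (ZSpan.isAddFundamentalDomain' b volume) h_symm h_conv h_cpt hvol
  refine ⟨(x : Fin n → ℝ), ?_, ?_, hxs⟩
  · intro h
    exact hx0 (Subtype.ext (by simpa using h))
  · have hxmem : (x : Fin n → ℝ) ∈ span ℤ (Set.range b) := x.2
    rw [mem_span_range_iff_exists_fun] at hxmem
    obtain ⟨t, ht⟩ := hxmem
    refine ⟨t, ?_⟩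
    funext j
    rw [← ht]
    simp only [Finset.sum_apply, Pi.smul_apply]
    rw [Matrix.mulVec, dotProduct]
    exact Finset.sum_congr rfl fun i _ => by rw [zsmul_eq_mul, hb]; ring
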